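/- Let G be a vertex-transitive finite graph on N vertices and S ⊆ V(G) with |S| = M. Then the clique number of the induced subgraph satisfies ω(G[S]) ≥ ⌈(M/N)·ω(G)⌉. -/

import Mathlib

open Finset

/-- A graph is vertex-transitive if its automorphism group acts transitively on vertices. -/
def SimpleGraph.IsVertexTransitive {V : Type*} (G : SimpleGraph V) : Prop :=
  ∀ u v : V, ∃ σ : G ≃g G, σ u = v

theorem stmt_1 {V : Type*} [Fintype V] (G : SimpleGraph V)
    (htrans : G.IsVertexTransitive)
    (N M : ℕ) (hN : Fintype.card V = N)
    (S : Finset V) (hM : S.card = M) :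
    ⌈((M : ℝ) / (N : ℝ)) * (G.cliqueNum : ℝ)⌉₊ ≤ (G.induce (S : Set V)).cliqueNum := by
  classical
  have hι : Function.Injective (fun σ : G ≃g G => σ.toEquiv) := by
    intro a b h
    ext x
    exact congrArg (fun e => e x) h
  haveI : Fintype (G ≃g G) := Fintype.ofInjective _ hι
  rcases Nat.eq_zero_or_pos N with hN0 | hNpos
  · subst hN0; simp
  obtain ⟨C, hC⟩ := G.exists_isNClique_cliqueNum
  set ω := G.cliqueNum with hω
  rcases Nat.eq_zero_or_pos ω with hω0 | hωpos
  · rw [hω0]; simp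
  have hCne : C.Nonempty := by
    rw [← Finset.card_pos, hC.card_eq]; exact hωpos
  obtain ⟨c₀, hc₀⟩ := hCne
  -- fibers
  set F : V → V → Finset (G ≃g G) := fun c v => univ.filter (fun σ => σ c = v) with hF
  set k := (F c₀ c₀).card with hk
  have hfib : ∀ c v, (F c v).card = k := by
    intro c v
    obtain ⟨τ, hτ⟩ := htrans c₀ c
    obtain ⟨ρ, hρ⟩ := htrans v c₀
    rw [hk]
    apply Finset.card_bij' (fun σ _ => (τ.trans σ).trans ρ)
      (fun π _ => (τ.symm.trans π).trans ρ.symm)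
    · intro σ hσ
      simp only [hF, Finset.mem_filter, Finset.mem_univ, true_and] at hσ ⊢
      simp [hτ, hσ, hρ]
    · intro π hπ
      simp only [hF, Finset.mem_filter, Finset.mem_univ, true_and] at hπ ⊢
      have : τ.symm c = c₀ := by rw [← hτ]; exact τ.symm_apply_apply c₀
      have h2 : ρ.symm c₀ = v := by rw [← hρ]; exact ρ.symm_apply_apply v
      simp [this, hπ, h2]
    · intro σ _; ext x; simp
    · intro π _; ext x; simp
  have hkpos : 1 ≤ k := by
    rw [hk]
    apply Finset.card_pos.mpr
    exact ⟨RelIso.refl _, by simp [hF]⟩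
  -- total count of automorphisms
  have hcardAut : Fintype.card (G ≃g G) = N * k := by
    rw [← Finset.card_univ,
      Finset.card_eq_sum_card_fiberwise (f := fun σ : G ≃g G => σ c₀)
        (t := univ) (fun x _ => mem_univ _)]
    have h : ∀ v ∈ (univ : Finset V),
        #(filter (fun σ : G ≃g G => σ c₀ = v) univ) = k := fun v _ => hfib c₀ v
    rw [Finset.sum_congr rfl h]
    simp [← hN, Finset.card_univ, mul_comm]
  -- for each c, count automorphisms sending c into S
  have hcount : ∀ c : V, (univ.filter fun σ : G ≃g G => σ c ∈ S).card = M * k := by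
    intro c
    rw [Finset.card_eq_sum_card_fiberwise (f := fun σ : G ≃g G => σ c)
        (s := univ.filter fun σ : G ≃g G => σ c ∈ S)
        (t := S) (fun σ hσ => (mem_filter.mp hσ).2)]
    have : ∀ v ∈ S, ((univ.filter fun σ : G ≃g G => σ c ∈ S).filter
        fun σ => σ c = v).card = k := by
      intro v hv
      rw [← hfib c v]
      congr 1
      ext σ
      simp only [hF, Finset.mem_filter, Finset.mem_univ, true_and]
      constructor
      · rintro ⟨-, h⟩; exact h
      · intro h; exact ⟨h ▸ hv, h⟩
    rw [Finset.sum_congr rfl this, Finset.sum_const, hM, smul_eq_mul]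
  -- f σ := size of the intersection of σ(C) with S
  set f : (G ≃g G) → ℕ := fun σ => (C.image ⇑σ ∩ S).card with hf
  have hfeq : ∀ σ : G ≃g G, f σ = (C.filter fun c => σ c ∈ S).card := by
    intro σ
    show (C.image ⇑σ ∩ S).card = (C.filter fun c => σ c ∈ S).card
    have : C.image ⇑σ ∩ S = (C.filter fun c => σ c ∈ S).image ⇑σ := by
      ext v
      simp only [Finset.mem_inter, Finset.mem_image, Finset.mem_filter]
      constructor
      · rintro ⟨⟨c, hc, rfl⟩, hvS⟩; exact ⟨c, ⟨hc, hvS⟩, rfl⟩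
      · rintro ⟨c, ⟨hc, hcS⟩, rfl⟩; exact ⟨⟨c, hc, rfl⟩, hcS⟩
    rw [this, Finset.card_image_of_injective _ σ.injective]
  have hsum : ∑ σ : G ≃g G, f σ = ω * (M * k) := by
    calc ∑ σ : G ≃g G, f σ = ∑ σ : G ≃g G, ∑ c ∈ C, if σ c ∈ S then 1 else 0 := by
          refine Finset.sum_congr rfl fun σ _ => ?_
          rw [hfeq σ, Finset.card_filter]
      _ = ∑ c ∈ C, ∑ σ : G ≃g G, if σ c ∈ S then 1 else 0 := Finset.sum_comm
      _ = ∑ c ∈ C, (univ.filter fun σ : G ≃g G => σ c ∈ S).card := by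
          refine Finset.sum_congr rfl fun c _ => ?_
          rw [Finset.card_filter]
      _ = ∑ c ∈ C, M * k := Finset.sum_congr rfl fun c _ => hcount c
      _ = ω * (M * k) := by rw [Finset.sum_const, hC.card_eq, smul_eq_mul]
  -- choose σ maximizing f
  obtain ⟨σ, -, hmax⟩ := Finset.exists_max_image (univ : Finset (G ≃g G)) f
    ⟨RelIso.refl _, mem_univ _⟩
  have hle : ω * (M * k) ≤ N * k * f σ := by
    rw [← hsum, ← hcardAut, ← Finset.card_univ, ← smul_eq_mul]
    exact Finset.sum_le_card_nsmul _ _ _ (fun x _ => hmax x (mem_univ x))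
  have hkey : M * ω ≤ N * f σ := by
    have h1 : (M * ω) * k ≤ (N * f σ) * k := by ring_nf; ring_nf at hle; linarith
    exact Nat.le_of_mul_le_mul_right h1 hkpos
  -- the intersection gives a clique in the induced graph
  set T := C.image ⇑σ ∩ S with hT
  have hTS : ∀ x ∈ T, x ∈ (S : Set V) := fun x hx => (Finset.mem_inter.mp hx).2
  set T' : Finset ((S : Set V)) := T.subtype (fun x => x ∈ (S : Set V)) with hT'
  have hT'card : T'.card = f σ := by
    rw [hT', Finset.card_subtype, Finset.filter_true_of_mem hTS]
  have hclique : (G.induce (S : Set V)).IsClique (T' : Set ((S : Set V))) := by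
    intro a ha b hb hab
    simp only [hT', Finset.mem_coe, Finset.mem_subtype] at ha hb
    have hane : (a : V) ≠ (b : V) := fun h => hab (Subtype.ext h)
    obtain ⟨ca, hca, hcae⟩ := Finset.mem_image.mp (Finset.mem_inter.mp ha).1
    obtain ⟨cb, hcb, hcbe⟩ := Finset.mem_image.mp (Finset.mem_inter.mp hb).1
    have hcane : ca ≠ cb := by
      rintro rfl; exact hane (hcae.symm.trans hcbe)
    have : G.Adj ca cb := hC.isClique hca hcb hcane
    have : G.Adj (σ ca) (σ cb) := σ.map_adj_iff.mpr this
    rw [hcae, hcbe] at this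
    exact this
  have hfinal : f σ ≤ (G.induce (S : Set V)).cliqueNum := by
    rw [← hT'card]
    exact SimpleGraph.IsClique.card_le_cliqueNum (tc := hclique)
  refine le_trans (Nat.ceil_le.mpr ?_) hfinal
  rw [div_mul_eq_mul_div, div_le_iff₀ (by exact_mod_cast hNpos)]
  have hkeyR : (M : ℝ) * ω ≤ (N : ℝ) * (f σ) := by exact_mod_cast hkey
  linarith
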